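/- A poset has one-step closure if and only if it is meet continuous and has weak one-step closure. -/

import Mathlib

open Set

section OrderDefs

variable {L : Type*} [Preorder L]

/-- Downward closure `↓A`. -/
def dw (A : Set L) : Set L := {x | ∃ a ∈ A, x ≤ a}

/-- Upward closure `↑A`. -/
def up (A : Set L) : Set L := {x | ∃ a ∈ A, a ≤ x}

/-- Scott closure of a set. -/
def scottCl (A : Set L) : Set L := @closure L (Topology.scott L Set.univ) A

/-- `A' = {x : ∃ directed D ⊆ ↓A with x = sup D}`. -/
def oneStep (A : Set L) : Set L :=
  {x | ∃ D : Set L, D ⊆ dw A ∧ D.Nonempty ∧ DirectedOn (· ≤ ·) D ∧ IsLUB D x}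

/-- `A'' = {x : ∃ directed D ⊆ ↓A with x ≤ sup D}`. -/
def weakOneStep (A : Set L) : Set L :=
  {x | ∃ D : Set L, D ⊆ dw A ∧ D.Nonempty ∧ DirectedOn (· ≤ ·) D ∧ ∃ y, IsLUB D y ∧ x ≤ y}

/-- A poset has one-step closure if `cl(A) = A'` for all `A`. -/
def HasOneStepClosure (L : Type*) [Preorder L] : Prop :=
  ∀ A : Set L, scottCl A = oneStep A

/-- A poset has weak one-step closure if `cl(A) = A''` for all `A`. -/
def HasWeakOneStepClosure (L : Type*) [Preorder L] : Prop :=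
  ∀ A : Set L, scottCl A = weakOneStep A

/-- Meet continuity: `x ≤ sup D` implies `x ∈ cl(↓D ∩ ↓x)`. -/
def MeetContinuous (L : Type*) [Preorder L] : Prop :=
  ∀ x : L, ∀ D : Set L, D.Nonempty → DirectedOn (· ≤ ·) D → ∀ s, IsLUB D s → x ≤ s →
    x ∈ scottCl (dw D ∩ dw ({x} : Set L))

/-- The way-below relation `x ≪ y`. -/
def wayBelow (x y : L) : Prop :=
  ∀ D : Set L, D.Nonempty → DirectedOn (· ≤ ·) D → ∀ s, IsLUB D s → y ≤ s →
    (D ∩ up ({x} : Set L)).Nonempty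

/-- The weakly way-below relation `x ≪_w y`. -/
def weaklyWayBelow (x y : L) : Prop :=
  ∀ D : Set L, D.Nonempty → DirectedOn (· ≤ ·) D → IsLUB D y →
    (D ∩ up ({x} : Set L)).Nonempty

/-- A continuous poset: each `⇓x` is directed with supremum `x`. -/
def ContinuousPoset (L : Type*) [Preorder L] : Prop :=
  ∀ x : L, {y | wayBelow y x}.Nonempty ∧ DirectedOn (· ≤ ·) {y | wayBelow y x} ∧
    IsLUB {y | wayBelow y x} x

/-- An exact poset: each `⇓_w x` is directed with supremum `x`. -/
def ExactPoset (L : Type*) [Preorder L] : Prop :=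
  ∀ x : L, {y | weaklyWayBelow y x}.Nonempty ∧ DirectedOn (· ≤ ·) {y | weaklyWayBelow y x} ∧
    IsLUB {y | weaklyWayBelow y x} x

/-- `F ≪ x` for a set `F`: every directed `D` with `sup D ≥ x` meets `↑F`. -/
def finWayBelow (F : Set L) (x : L) : Prop :=
  ∀ D : Set L, D.Nonempty → DirectedOn (· ≤ ·) D → ∀ s, IsLUB D s → x ≤ s →
    (D ∩ up F).Nonempty

/-- A quasicontinuous poset: each `fin(x)` is a directed family (Smyth preorder)
with `↑x = ⋂_{F ∈ fin(x)} ↑F`. -/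
def QuasicontinuousPoset (L : Type*) [Preorder L] : Prop :=
  ∀ x : L, {F : Set L | F.Finite ∧ finWayBelow F x}.Nonempty ∧
    DirectedOn (fun F G => up G ⊆ up F) {F : Set L | F.Finite ∧ finWayBelow F x} ∧
    up ({x} : Set L) = ⋂ F ∈ {F : Set L | F.Finite ∧ finWayBelow F x}, up F

/-- A dcpo: every (nonempty) directed subset has a least upper bound. -/
def IsDcpo (L : Type*) [Preorder L] : Prop :=
  ∀ D : Set L, D.Nonempty → DirectedOn (· ≤ ·) D → ∃ x, IsLUB D x

end OrderDefs


section AuxLemmas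
variable {L : Type*} [PartialOrder L]

lemma dw_mono' {A B : Set L} (h : A ⊆ B) : dw A ⊆ dw B := by
  rintro x ⟨a, ha, hxa⟩; exact ⟨a, h ha, hxa⟩

lemma subset_dw' (A : Set L) : A ⊆ dw A := fun x hx => ⟨x, hx, le_rfl⟩

lemma dw_dw' (A : Set L) : dw (dw A) ⊆ dw A := by
  rintro x ⟨b, ⟨a, ha, hba⟩, hxb⟩
  exact ⟨a, ha, hxb.trans hba⟩

lemma scottCl_spec (A : Set L) :
    A ⊆ scottCl A ∧ IsLowerSet (scottCl A) ∧ DirSupClosed (scottCl A) := by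
  letI := Topology.scott L Set.univ
  haveI : Topology.IsScott L Set.univ := ⟨rfl⟩
  have h : IsClosed (scottCl A) := isClosed_closure
  exact ⟨subset_closure, Topology.IsScott.isLowerSet_of_isClosed h,
    Topology.IsScott.dirSupClosed_of_isClosed h⟩

lemma weakOneStep_subset_scottCl (A : Set L) : weakOneStep A ⊆ scottCl A := by
  rintro x ⟨D, hD, hDne, hDdir, y, hy, hxy⟩
  obtain ⟨hsub, hlow, hdsc⟩ := scottCl_spec A
  have hDcl : D ⊆ scottCl A := by
    rintro d hd
    obtain ⟨a, ha, hda⟩ := hD hd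
    exact hlow hda (hsub ha)
  exact hlow hxy (hdsc hDcl hDne hDdir hy)

lemma oneStep_subset_weakOneStep (A : Set L) : oneStep A ⊆ weakOneStep A := by
  rintro x ⟨D, hD, hDne, hDdir, hlub⟩
  exact ⟨D, hD, hDne, hDdir, x, hlub, le_rfl⟩

end AuxLemmas

/-- A poset has one-step closure iff it is meet continuous and has weak one-step closure. -/
theorem hasOneStepClosure_iff_meetContinuous_and_weak {L : Type*} [PartialOrder L] :
    HasOneStepClosure L ↔ MeetContinuous L ∧ HasWeakOneStepClosure L := by
  constructor
  · intro h
    have hweak : HasWeakOneStepClosure L := by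
      intro A
      apply Set.Subset.antisymm
      · rw [h A]; exact oneStep_subset_weakOneStep A
      · exact weakOneStep_subset_scottCl A
    refine ⟨?_, hweak⟩
    intro x D hDne hDdir s hs hxs
    have hxcl : x ∈ scottCl D := by
      have hs' : s ∈ scottCl D :=
        weakOneStep_subset_scottCl D ⟨D, subset_dw' D, hDne, hDdir, s, hs, le_rfl⟩
      exact (scottCl_spec D).2.1 hxs hs'
    rw [h D] at hxcl
    obtain ⟨E, hE, hEne, hEdir, hlub⟩ := hxcl
    apply weakOneStep_subset_scottCl
    refine ⟨E, ?_, hEne, hEdir, x, hlub, le_rfl⟩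
    intro e he
    refine subset_dw' _ ⟨hE he, ⟨x, rfl, hlub.1 he⟩⟩
  · rintro ⟨hmc, hw⟩ A
    apply Set.Subset.antisymm
    · intro x hx
      rw [hw A] at hx
      obtain ⟨D, hD, hDne, hDdir, y, hy, hxy⟩ := hx
      have := hmc x D hDne hDdir y hy hxy
      rw [hw _] at this
      obtain ⟨E, hE, hEne, hEdir, z, hz, hxz⟩ := this
      have hEx : ∀ e ∈ E, e ≤ x := by
        intro e he
        obtain ⟨b, ⟨_, ⟨c, hc, hbc⟩⟩, heb⟩ := hE he
        rcases hc with rfl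
        exact heb.trans hbc
      refine ⟨E, ?_, hEne, hEdir, ?_⟩
      · intro e he
        obtain ⟨b, ⟨hbD, _⟩, heb⟩ := hE he
        have : b ∈ dw A := dw_dw' A ((dw_mono' hD) hbD)
        obtain ⟨a, ha, hba⟩ := this
        exact ⟨a, ha, heb.trans hba⟩
      · constructor
        · intro e he; exact hEx e he
        · intro u hu
          exact hxz.trans (hz.2 hu)
    · exact fun x hx => weakOneStep_subset_scottCl A (oneStep_subset_weakOneStep A hx)
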